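/- An Eulerian trail t of a digraph G with fixed initial vertex is unique (i.e., G has exactly one Eulerian trail starting at that vertex) if and only if t admits no proper transposition, i.e., t cannot be written as u·a·x·b·z·a·y·b·v (allowing the degenerate case a = b, t = u·a·x·a·y·a·v) with the letters immediately following the two displayed occurrences of a being distinct. -/

import Mathlib

namespace Stmt11

variable {V : Type*}

/-- Edge multiset of a walk. -/
def ed (l : List V) : Multiset (V × V) := (l.zip l.tail : List (V × V))

@[simp] lemma ed_nil : ed ([] : List V) = 0 := rfl
@[simp] lemma ed_single (a : V) : ed [a] = 0 := rfl
lemma ed_cons_cons (a b : V) (l : List V) :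
    ed (a :: b :: l) = (a, b) ::ₘ ed (b :: l) := rfl

lemma ed_append (p : List V) (a : V) (q : List V) :
    ed (p ++ a :: q) = ed (p ++ [a]) + ed (a :: q) := by
  induction p with
  | nil => simp
  | cons c p ih =>
    cases p with
    | nil =>
      show ed (c :: a :: q) = ed [c, a] + ed (a :: q)
      rw [ed_cons_cons]
      simp [ed_cons_cons]
    | cons d p' =>
      show ed (c :: d :: (p' ++ a :: q)) = ed (c :: d :: (p' ++ [a])) + ed (a :: q)
      rw [ed_cons_cons, ed_cons_cons]
      rw [show (d :: (p' ++ a :: q)) = (d :: p') ++ a :: q from rfl] at *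
      rw [ih]
      rw [Multiset.cons_add]
      rfl

lemma ed_split (a : V) (x : List V) (b : V) (q : List V) :
    ed (a :: (x ++ b :: q)) = ed (a :: (x ++ [b])) + ed (b :: q) :=
  ed_append (a :: x) b q

lemma mem_ed : ∀ {l : List V} {p q : V}, (p, q) ∈ ed l → ∃ x y, l = x ++ p :: q :: y
  | [], p, q, h => by simp [ed] at h
  | [c], p, q, h => by simp [ed] at h
  | c :: d :: r, p, q, h => by
    rw [ed_cons_cons] at h
    rcases Multiset.mem_cons.1 h with h | h
    · obtain ⟨h1, h2⟩ := Prod.mk.injEq .. ▸ h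
      exact ⟨[], r, by simp_all⟩
    · obtain ⟨x, y, hxy⟩ := mem_ed h
      exact ⟨c :: x, y, by simp [hxy]⟩

lemma ed_src {l : List V} {p q : V} (h : (p, q) ∈ ed l) : p ∈ l := by
  obtain ⟨x, y, rfl⟩ := mem_ed h; simp

lemma ed_tgt {l : List V} {p q : V} (h : (p, q) ∈ ed l) : q ∈ l := by
  obtain ⟨x, y, rfl⟩ := mem_ed h; simp

lemma head?_ac (l : List V) (a : V) (r : List V) :
    (l ++ a :: r).head? = (l ++ [a]).head? := by cases l <;> rfl

lemma head?_pp (u : List V) (a : V) (M M' : List V) :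
    (u ++ a :: M).head? = (u ++ a :: M').head? := by cases u <;> rfl

lemma walk_confined (P : V → Prop) :
    ∀ l : List V, (∀ h, l.head? = some h → ¬ P h) →
      (∀ p q, (p, q) ∈ ed l → P q → P p) → ∀ v ∈ l, ¬ P v
  | [] => by simp
  | [c] => by
    intro h1 h2 v hv
    simp only [List.mem_singleton] at hv
    subst hv
    exact h1 v rfl
  | c :: d :: r => by
    intro h1 h2 v hv
    have hPc := h1 c rfl
    have hPd : ¬ P d := fun h =>
      hPc (h2 c d (by rw [ed_cons_cons]; exact Multiset.mem_cons_self _ _) h)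
    have ih := walk_confined P (d :: r)
      (by
        intro h hh
        have : d = h := by simpa using hh
        exact this ▸ hPd)
      (fun p q hm => h2 p q (by rw [ed_cons_cons]; exact Multiset.mem_cons_of_mem hm))
    rcases List.mem_cons.1 hv with rfl | hv'
    · exact hPc
    · exact ih v hv'

lemma common_prefix :
    ∀ t s : List V, t ≠ [] → s.head? = t.head? → s ≠ t →
      ∃ w a t₁ s₁, t = w ++ a :: t₁ ∧ s = w ++ a :: s₁ ∧ t₁.head? ≠ s₁.head?
  | [], _, h, _, _ => absurd rfl h
  | c :: t', s, _, hh, hne => by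
    cases s with
    | nil => simp at hh
    | cons c' s' =>
      obtain rfl : c' = c := by simpa using hh
      by_cases h' : t'.head? = s'.head?
      · have ht' : t' ≠ [] := by
          rintro rfl
          have : s' = [] := by simpa using h'.symm
          exact hne (by rw [this])
        obtain ⟨w, a, t₁, s₁, h1, h2, h3⟩ :=
          common_prefix t' s' ht' h'.symm (fun h => hne (by rw [h]))
        exact ⟨c' :: w, a, t₁, s₁, by simp [h1], by simp [h2], h3⟩
      · exact ⟨[], c', t', s', rfl, rfl, h'⟩

lemma ed_pattern (u : List V) (a : V) (x : List V) (b : V) (z : List V)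
    (a' : V) (y : List V) (b' : V) (v : List V) :
    ed (u ++ [a] ++ x ++ [b] ++ z ++ [a'] ++ y ++ [b'] ++ v) =
      ed (u ++ [a]) + (ed (a :: (x ++ [b])) + (ed (b :: (z ++ [a'])) +
        (ed (a' :: (y ++ [b'])) + ed (b' :: v)))) := by
  simp only [List.append_assoc, List.cons_append, List.nil_append]
  rw [ed_append u a (x ++ b :: (z ++ a' :: (y ++ b' :: v))),
    ed_split a x b (z ++ a' :: (y ++ b' :: v)),
    ed_split b z a' (y ++ b' :: v),
    ed_split a' y b' v]

lemma ed_pattern3 (u : List V) (a : V) (x y v : List V) :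
    ed (u ++ [a] ++ x ++ [a] ++ y ++ [a] ++ v) =
      ed (u ++ [a]) + (ed (a :: (x ++ [a])) + (ed (a :: (y ++ [a])) + ed (a :: v))) := by
  simp only [List.append_assoc, List.cons_append, List.nil_append]
  rw [ed_append u a (x ++ a :: (y ++ a :: v)),
    ed_split a x a (y ++ a :: v),
    ed_split a y a v]

end Stmt11

open Stmt11 in
/-- An Eulerian trail with fixed initial vertex is unique iff it admits no
proper transposition. -/
theorem stmt_11 {V : Type*} (E : Multiset (V × V)) (t : List V)
    (htrail : t ≠ [] ∧ (↑(t.zip t.tail) : Multiset (V × V)) = E) :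
    (∀ s : List V, s ≠ [] → s.head? = t.head? →
        (↑(s.zip s.tail) : Multiset (V × V)) = E → s = t) ↔
      ¬ ∃ (a b : V) (u v x y z : List V),
        ((t = u ++ [a] ++ x ++ [b] ++ z ++ [a] ++ y ++ [b] ++ v) ∨
          (a = b ∧ z = [] ∧ t = u ++ [a] ++ x ++ [a] ++ y ++ [a] ++ v)) ∧
        (x ++ [b]).head? ≠ (y ++ [b]).head? := by
  obtain ⟨htne, hE⟩ := htrail
  have hE' : ed t = E := hE
  constructor
  · -- uniqueness → no proper transposition
    intro huniq
    rintro ⟨a, b, u, v, x, y, z, hpat | ⟨rfl, rfl, hpat⟩, hne⟩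
    · -- general case
      set s : List V := u ++ [a] ++ y ++ [b] ++ z ++ [a] ++ x ++ [b] ++ v with hsdef
      have hshead : s.head? = t.head? := by
        rw [hpat, hsdef]
        simp only [List.append_assoc, List.cons_append, List.nil_append]
        exact head?_pp u a _ _
      have hsed : (↑(s.zip s.tail) : Multiset (V × V)) = E := by
        show ed s = E
        rw [← hE', hpat, hsdef, ed_pattern, ed_pattern]
        abel
      have hseq : s = t := huniq s (by simp [hsdef]) hshead hsed
      rw [hpat, hsdef] at hseq
      simp only [List.append_assoc, List.cons_append, List.nil_append] at hseq
      have h2 := List.cons_injective.eq_iff.mp (List.append_cancel_left hseq)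
      -- h2 : y ++ b :: (z ++ a :: (x ++ b :: v)) = x ++ b :: (z ++ a :: (y ++ b :: v))
      apply hne
      calc (x ++ [b]).head? = (x ++ b :: (z ++ a :: (y ++ b :: v))).head? :=
            (head?_ac _ _ _).symm
        _ = (y ++ b :: (z ++ a :: (x ++ b :: v))).head? := by rw [h2]
        _ = (y ++ [b]).head? := head?_ac _ _ _
    · -- degenerate case
      set s : List V := u ++ [a] ++ y ++ [a] ++ x ++ [a] ++ v with hsdef
      have hshead : s.head? = t.head? := by
        rw [hpat, hsdef]
        simp only [List.append_assoc, List.cons_append, List.nil_append]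
        exact head?_pp u a _ _
      have hsed : (↑(s.zip s.tail) : Multiset (V × V)) = E := by
        show ed s = E
        rw [← hE', hpat, hsdef, ed_pattern3, ed_pattern3]
        abel
      have hseq : s = t := huniq s (by simp [hsdef]) hshead hsed
      rw [hpat, hsdef] at hseq
      simp only [List.append_assoc, List.cons_append, List.nil_append] at hseq
      have h2 := List.cons_injective.eq_iff.mp (List.append_cancel_left hseq)
      apply hne
      calc (x ++ [a]).head? = (x ++ a :: (y ++ a :: v)).head? := (head?_ac _ _ _).symm
        _ = (y ++ a :: (x ++ a :: v)).head? := by rw [h2]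
        _ = (y ++ [a]).head? := head?_ac _ _ _
  · -- no proper transposition → uniqueness
    intro hno s hsne hhead hedge
    by_contra hst
    obtain ⟨w, a, t₁, s₁, ht, hs, hne⟩ := common_prefix t s htne hhead hst
    have hed : ed (a :: s₁) = ed (a :: t₁) := by
      have h1 : ed s = ed t := by
        show (↑(s.zip s.tail) : Multiset (V × V)) = ed t
        rw [hedge, hE']
      rw [ht, hs, ed_append w a s₁, ed_append w a t₁] at h1
      exact add_left_cancel h1
    cases s₁ with
    | nil =>
      cases t₁ with
      | nil => exact hne rfl
      | cons d t₂ =>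
        rw [ed_cons_cons] at hed
        simp at hed
    | cons c s₂ =>
      cases t₁ with
      | nil =>
        rw [ed_cons_cons] at hed
        simp at hed
      | cons d t₂ =>
        have hcd : c ≠ d := fun h => hne (by simp [h])
        have hmem : (a, c) ∈ ed (a :: d :: t₂) := by
          rw [← hed, ed_cons_cons]
          exact Multiset.mem_cons_self _ _
        rw [ed_cons_cons] at hmem
        have hmem' : (a, c) ∈ ed (d :: t₂) := by
          rcases Multiset.mem_cons.1 hmem with h | h
          · exact absurd (congrArg Prod.snd h) hcd
          · exact h
        obtain ⟨X, R', hsplit⟩ := mem_ed hmem'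
        -- hsplit : d :: t₂ = X ++ a :: c :: R'
        by_cases hb : ∃ b, b ∈ X ∧ b ∈ c :: R'
        · obtain ⟨b, hbX, hbcR⟩ := hb
          obtain ⟨x, z, hX⟩ := List.append_of_mem hbX
          obtain ⟨y, v, hY⟩ := List.append_of_mem hbcR
          refine hno ⟨a, b, w, v, x, y, z, Or.inl ?_, ?_⟩
          · simp only [List.append_assoc, List.cons_append, List.nil_append]
            rw [ht, hsplit, hX, hY]
            simp [List.append_assoc]
          · have h1 : (x ++ [b]).head? = some d := by
              have hEq : x ++ b :: (z ++ a :: c :: R') = d :: t₂ := by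
                rw [hsplit, hX]; simp [List.append_assoc]
              rw [← head?_ac x b (z ++ a :: c :: R'), hEq]
              rfl
            have h2 : (y ++ [b]).head? = some c := by
              rw [← head?_ac y b v, ← hY]
              rfl
            rw [h1, h2]
            simpa using hcd.symm
        · by_cases ha : a ∈ c :: R'
          · obtain ⟨y, v, hY⟩ := List.append_of_mem ha
            refine hno ⟨a, a, w, v, X, y, [], Or.inr ⟨rfl, rfl, ?_⟩, ?_⟩
            · simp only [List.append_assoc, List.cons_append, List.nil_append]
              rw [ht, hsplit, hY]
            · have h1 : (X ++ [a]).head? = some d := by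
                have hEq : X ++ a :: c :: R' = d :: t₂ := hsplit.symm
                rw [← head?_ac X a (c :: R'), hEq]
                rfl
              have h2 : (y ++ [a]).head? = some c := by
                rw [← head?_ac y a v, ← hY]
                rfl
              rw [h1, h2]
              simpa using hcd.symm
          · -- contradiction via connectivity
            push_neg at hb
            have key : ed (c :: s₂) = ed (a :: (X ++ [a])) + ed (c :: R') := by
              have h2 : ed (a :: d :: t₂) =
                  ed (a :: (X ++ [a])) + ((a, c) ::ₘ ed (c :: R')) := by
                rw [show (a :: d :: t₂ : List V) = a :: (X ++ a :: (c :: R')) from by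
                  rw [hsplit]]
                rw [ed_split a X a (c :: R'), ed_cons_cons]
              have h3 := hed.trans h2
              rw [ed_cons_cons, Multiset.add_cons] at h3
              exact (Multiset.cons_inj_right _).mp h3
            have conf : ∀ o ∈ c :: s₂, ¬ (o = a ∨ o ∈ X) := by
              apply walk_confined
              · intro h hh
                obtain rfl : c = h := by simpa using hh
                rintro (rfl | hcX)
                · exact ha List.mem_cons_self
                · exact hb c hcX List.mem_cons_self
              · intro p q hpq hPq
                rw [key] at hpq
                rcases Multiset.mem_add.1 hpq with h | h
                · have hp := ed_src h
                  rcases List.mem_cons.1 hp with rfl | hp'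
                  · exact Or.inl rfl
                  · rcases List.mem_append.1 hp' with hp'' | hp''
                    · exact Or.inr hp''
                    · exact Or.inl (List.mem_singleton.1 hp'')
                · exfalso
                  have hq := ed_tgt h
                  rcases hPq with rfl | hqX
                  · exact ha hq
                  · exact hb q hqX hq
            have hedge0 : ∃ q0, (a, q0) ∈ ed (a :: (X ++ [a])) := by
              cases X with
              | nil => exact ⟨a, by simp [ed_cons_cons]⟩
              | cons e X' =>
                exact ⟨e, by
                  rw [show (a :: ((e :: X') ++ [a]) : List V) = a :: e :: (X' ++ [a]) from
                    rfl, ed_cons_cons]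
                  exact Multiset.mem_cons_self _ _⟩
            obtain ⟨q0, hq0⟩ := hedge0
            have hmem2 : (a, q0) ∈ ed (c :: s₂) := by
              rw [key]
              exact Multiset.mem_add.2 (Or.inl hq0)
            exact conf a (ed_src hmem2) (Or.inl rfl)
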